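/- For all n ≥ 1, the number of permutations of [n] avoiding both generalized patterns 1-23 and 2-13 equals 2^{n-1}. -/

import Mathlib

open scoped Classical

def contains123 {n : ℕ} (π : Equiv.Perm (Fin n)) : Prop :=
  ∃ i j : ℕ, ∃ (_ : i < j) (hj : j + 1 < n),
    π ⟨i, by omega⟩ < π ⟨j, by omega⟩ ∧ π ⟨j, by omega⟩ < π ⟨j + 1, hj⟩

def contains213 {n : ℕ} (π : Equiv.Perm (Fin n)) : Prop :=
  ∃ i j : ℕ, ∃ (_ : i < j) (hj : j + 1 < n),
    π ⟨j, by omega⟩ < π ⟨i, by omega⟩ ∧ π ⟨i, by omega⟩ < π ⟨j + 1, hj⟩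

namespace Stmt7Aux

/-- normalized bit predicate: position `p` (1 ≤ p ≤ n-1) has bit true -/
def BBp (n : ℕ) (b : Fin (n-1) → Bool) (p : ℕ) : Prop :=
  ∃ h : p - 1 < n - 1, 1 ≤ p ∧ b ⟨p-1, h⟩ = true

lemma BBp_bounds {n b p} (h : BBp n b p) : 1 ≤ p ∧ p < n := by
  obtain ⟨h1, h2, _⟩ := h; exact ⟨h2, by omega⟩

/-- least q > p with bit false (positions ≥ n always have bit false) -/
noncomputable def nzf (n : ℕ) (b : Fin (n-1) → Bool) (p : ℕ) : ℕ :=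
  sInf {q | p < q ∧ ¬ BBp n b q}

lemma nzf_mem (n b p) : p < nzf n b p ∧ ¬ BBp n b (nzf n b p) := by
  have : (n + p + 1) ∈ {q | p < q ∧ ¬ BBp n b q} := by
    refine ⟨by omega, fun h => ?_⟩
    have := BBp_bounds h; omega
  exact Nat.sInf_mem ⟨_, this⟩

lemma nzf_le {n b p q} (hq : p < q) (h : ¬ BBp n b q) : nzf n b p ≤ q :=
  Nat.sInf_le ⟨hq, h⟩

lemma nzf_min {n b p q} (h1 : p < q) (h2 : q < nzf n b p) : BBp n b q := by
  by_contra h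
  exact absurd (nzf_le h1 h) (by omega)

lemma nzf_le_n {n b p} (hp : p < n) : nzf n b p ≤ n :=
  nzf_le hp (fun h => by have := BBp_bounds h; omega)

noncomputable def gf (n : ℕ) (b : Fin (n-1) → Bool) (p : ℕ) : ℕ :=
  if BBp n b p then p else nzf n b p

lemma gf_ge (n b p) : p ≤ gf n b p := by
  unfold gf; split
  · exact le_refl p
  · exact le_of_lt (nzf_mem n b p).1

lemma gf_pos {n b p} (hp : p < n) : 1 ≤ gf n b p := by
  unfold gf; split
  · next h => exact (BBp_bounds h).1
  · have := (nzf_mem n b p).1; omega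

lemma gf_le {n b p} (hp : p < n) : gf n b p ≤ n := by
  unfold gf; split
  · omega
  · exact nzf_le_n hp

lemma gf_inj {n b p p'} (hp : p < n) (hp' : p' < n)
    (h : gf n b p = gf n b p') : p = p' := by
  unfold gf at h
  split at h <;> split at h
  · exact h
  · next h1 h2 =>
    exfalso
    have : BBp n b (nzf n b p') := h ▸ h1
    exact (nzf_mem n b p').2 this
  · next h1 h2 =>
    exfalso
    have : BBp n b (nzf n b p) := h.symm ▸ h2
    exact (nzf_mem n b p).2 this
  · next h1 h2 =>
    rcases lt_trichotomy p p' with hlt | heq | hgt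
    · exact absurd (nzf_min hlt (h ▸ (nzf_mem n b p').1)) h2
    · exact heq
    · exact absurd (nzf_min hgt (h.symm ▸ (nzf_mem n b p).1)) h1

noncomputable def decodeFun (n : ℕ) (b : Fin (n-1) → Bool) : Fin n → Fin n :=
  fun p => ⟨n - gf n b p, by have := gf_pos (b := b) p.2; have := p.2; omega⟩

lemma decodeFun_inj (n b) : Function.Injective (decodeFun n b) := by
  intro p p' h
  simp only [decodeFun, Fin.mk.injEq] at h
  have h1 := gf_pos (b := b) p.2
  have h2 := gf_pos (b := b) p'.2
  have h3 := gf_le (b := b) p.2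
  have h4 := gf_le (b := b) p'.2
  exact Fin.ext (gf_inj (b := b) p.2 p'.2 (by omega))

noncomputable def decodePerm (n : ℕ) (b : Fin (n-1) → Bool) : Equiv.Perm (Fin n) :=
  Equiv.ofBijective _ (Finite.injective_iff_bijective.mp (decodeFun_inj n b))

lemma decodePerm_apply (n b) (p : Fin n) :
    decodePerm n b p = ⟨n - gf n b p, by have := gf_pos (b := b) p.2; have := p.2; omega⟩ := rfl

lemma decode_lt_iff (n b) (p q : Fin n) :
    decodePerm n b p < decodePerm n b q ↔ gf n b (q : ℕ) < gf n b (p : ℕ) := by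
  rw [decodePerm_apply, decodePerm_apply, Fin.lt_def]
  have h1 := gf_pos (b := b) p.2
  have h2 := gf_pos (b := b) q.2
  have h3 := gf_le (b := b) p.2
  have h4 := gf_le (b := b) q.2
  simp only [Fin.val_mk]
  omega


lemma keyAscent (n : ℕ) (b : Fin (n-1) → Bool) (i j : ℕ) (hij : i < j) (hj : j + 1 < n)
    (h1 : gf n b (j+1) < gf n b j) (h2 : gf n b (j+1) < gf n b i) : False := by
  -- first: ¬ BBp j
  have hBj : ¬ BBp n b j := by
    intro hB
    have hgj : gf n b j = j := if_pos hB
    have := gf_ge n b (j+1)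
    omega
  -- second: BBp (j+1)
  have hBj1 : BBp n b (j+1) := by
    by_contra hB
    have hgj : gf n b j = nzf n b j := if_neg hBj
    have h3 : nzf n b j ≤ j + 1 := nzf_le (by omega) hB
    have hgj1 : gf n b (j+1) = nzf n b (j+1) := if_neg hB
    have := (nzf_mem n b (j+1)).1
    omega
  have hgj1 : gf n b (j+1) = j + 1 := if_pos hBj1
  -- now i < j
  by_cases hBi : BBp n b i
  · have : gf n b i = i := if_pos hBi
    omega
  · have hgi : gf n b i = nzf n b i := if_neg hBi
    have h3 : nzf n b i ≤ j := nzf_le hij hBj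
    omega

lemma decode_avoids (n : ℕ) (b : Fin (n-1) → Bool) :
    ¬ contains123 (decodePerm n b) ∧ ¬ contains213 (decodePerm n b) := by
  constructor
  · rintro ⟨i, j, hij, hj, ha, hb⟩
    have h1 : gf n b (j+1) < gf n b j := (decode_lt_iff n b ⟨j, by omega⟩ ⟨j+1, hj⟩).mp hb
    have h2 : gf n b (j+1) < gf n b i :=
      (decode_lt_iff n b ⟨i, by omega⟩ ⟨j+1, hj⟩).mp (lt_trans ha hb)
    exact keyAscent n b i j hij hj h1 h2
  · rintro ⟨i, j, hij, hj, ha, hb⟩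
    have h1 : gf n b (j+1) < gf n b j :=
      (decode_lt_iff n b ⟨j, by omega⟩ ⟨j+1, hj⟩).mp (lt_trans ha hb)
    have h2 : gf n b (j+1) < gf n b i := (decode_lt_iff n b ⟨i, by omega⟩ ⟨j+1, hj⟩).mp hb
    exact keyAscent n b i j hij hj h1 h2

lemma decode_bit (n : ℕ) (b : Fin (n-1) → Bool) (p : ℕ) (h1 : 1 ≤ p) (h2 : p < n) :
    (∃ i : Fin n, (i : ℕ) < p ∧ decodePerm n b i < decodePerm n b ⟨p, h2⟩) ↔ BBp n b p := by
  constructor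
  · rintro ⟨i, hip, hlt⟩
    by_contra hB
    have hgp : gf n b p = nzf n b p := if_neg hB
    have hlt' : gf n b p < gf n b (i : ℕ) := (decode_lt_iff n b i ⟨p, h2⟩).mp hlt
    by_cases hBi : BBp n b (i : ℕ)
    · have : gf n b (i : ℕ) = (i : ℕ) := if_pos hBi
      have := (nzf_mem n b p).1
      omega
    · have hgi : gf n b (i : ℕ) = nzf n b (i : ℕ) := if_neg hBi
      have h3 : nzf n b (i : ℕ) ≤ p := nzf_le hip hB
      have := (nzf_mem n b p).1
      omega
  · intro hB
    -- witness: greatest z < p with ¬ BBp z  (z = 0 works since ¬ BBp 0)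
    set z := Nat.findGreatest (fun i => ¬ BBp n b i) (p-1) with hz
    have hP0 : ¬ BBp n b 0 := fun h => by have := BBp_bounds h; omega
    have hzspec : ¬ BBp n b z :=
      Nat.findGreatest_spec (P := fun i => ¬ BBp n b i) (m := 0) (by omega) hP0
    have hzle : z ≤ p - 1 := Nat.findGreatest_le _
    have hgreat : ∀ q, z < q → q ≤ p - 1 → BBp n b q := by
      intro q hq1 hq2
      by_contra hq
      exact (Nat.findGreatest_is_greatest (P := fun i => ¬ BBp n b i) hq1 hq2) hq
    -- nzf z > p
    have hnz : p < nzf n b z := by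
      rcases Nat.lt_or_ge p (nzf n b z) with h | h
      · exact h
      · exfalso
        have hzlt := (nzf_mem n b z).1
        have hzB := (nzf_mem n b z).2
        rcases Nat.lt_or_ge (nzf n b z) p with h' | h'
        · exact hzB (hgreat _ hzlt (by omega))
        · have : nzf n b z = p := by omega
          exact hzB (this ▸ hB)
    have hgz : gf n b z = nzf n b z := if_neg hzspec
    have hgp : gf n b p = p := if_pos hB
    refine ⟨⟨z, by omega⟩, by simp; omega, ?_⟩
    rw [decode_lt_iff]
    simp only [Fin.val_mk]
    omega


section Encode

variable {n : ℕ} (π : Equiv.Perm (Fin n))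

lemma hA_raw (hav : ¬ contains123 π ∧ ¬ contains213 π) (i j : ℕ) (hij : i < j)
    (hj : j + 1 < n) (h1 : π ⟨j, by omega⟩ < π ⟨j+1, hj⟩)
    (h2 : π ⟨i, by omega⟩ < π ⟨j+1, hj⟩) : False := by
  rcases lt_trichotomy (π ⟨i, by omega⟩) (π ⟨j, by omega⟩) with h | h | h
  · exact hav.1 ⟨i, j, hij, hj, h, h1⟩
  · have : (⟨i, by omega⟩ : Fin n) = ⟨j, by omega⟩ := π.injective h
    simp only [Fin.mk.injEq] at this
    omega
  · exact hav.2 ⟨i, j, hij, hj, h, h2⟩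

lemma rankLemma (hav : ¬ contains123 π ∧ ¬ contains213 π) :
    ∀ p, ∀ (hp : p < n), ∀ (i j : Fin n), (i : ℕ) < (j : ℕ) → (j : ℕ) < p →
      π i < π ⟨p, hp⟩ → π j < π ⟨p, hp⟩ → False := by
  intro p
  induction p using Nat.strong_induction_on with
  | _ p IH =>
    intro hp i j hij hjp h1 h2
    have hp2 : 2 ≤ p := by omega
    have hqn : (p - 1) + 1 < n := by omega
    have e : (⟨(p-1)+1, hqn⟩ : Fin n) = ⟨p, hp⟩ := Fin.ext (by show p-1+1 = p; omega)
    rcases lt_trichotomy (π ⟨p-1, by omega⟩) (π ⟨p, hp⟩) with hlt | heq | hgt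
    · refine hA_raw π hav (i : ℕ) (p-1) (by omega) hqn ?_ ?_
      · rw [e]; exact hlt
      · rw [e]
        have : (⟨(i : ℕ), by omega⟩ : Fin n) = i := Fin.eta i _
        rw [this]; exact h1
    · have : (⟨p-1, by omega⟩ : Fin n) = ⟨p, hp⟩ := π.injective heq
      simp only [Fin.mk.injEq] at this
      omega
    · have hjq : (j : ℕ) < p - 1 := by
        rcases Nat.lt_or_ge (j : ℕ) (p-1) with h | h
        · exact h
        · exfalso
          have : j = (⟨p-1, by omega⟩ : Fin n) := Fin.ext (by simp; omega)
          rw [this] at h2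
          exact absurd (h2.trans hgt) (lt_irrefl _)
      exact IH (p-1) (by omega) (by omega) i j hij hjq (h1.trans hgt) (h2.trans hgt)

lemma val_of_bit_true (hav : ¬ contains123 π ∧ ¬ contains213 π)
    (p : ℕ) (hp : p < n) (i0 : Fin n) (hi0 : (i0 : ℕ) < p)
    (hlt : π i0 < π ⟨p, hp⟩) : ((π ⟨p, hp⟩ : Fin n) : ℕ) = n - p := by
  set P := π ⟨p, hp⟩ with hP
  have hcard : (P : ℕ) = (Finset.univ.filter fun i => π i < P).card := by
    have hmap : (Finset.univ.filter fun i => π i < P)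
        = (Finset.Iio P).map π.symm.toEmbedding := by
      ext i
      simp only [Finset.mem_filter, Finset.mem_univ, true_and, Finset.mem_map,
        Finset.mem_Iio, Equiv.toEmbedding_apply, Equiv.symm_apply_eq]
      constructor
      · intro h; exact ⟨π i, h, rfl⟩
      · rintro ⟨a, ha, rfl⟩; exact ha
    rw [hmap, Finset.card_map, Fin.card_Iio]
  have hset : (Finset.univ.filter fun i => π i < P)
      = insert i0 (Finset.Ioi (⟨p, hp⟩ : Fin n)) := by
    ext i
    simp only [Finset.mem_filter, Finset.mem_univ, true_and, Finset.mem_insert,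
      Finset.mem_Ioi]
    constructor
    · intro h
      rcases lt_trichotomy (i : ℕ) p with hc | hc | hc
      · left
        by_contra hne
        rcases lt_trichotomy (i : ℕ) (i0 : ℕ) with hd | hd | hd
        · exact rankLemma π hav p hp i i0 hd hi0 h hlt
        · exact hne (Fin.ext hd)
        · exact rankLemma π hav p hp i0 i hd hc hlt h
      · exfalso
        have : i = (⟨p, hp⟩ : Fin n) := Fin.ext hc
        rw [this] at h; exact lt_irrefl _ h
      · right; rw [Fin.lt_def]; exact hc
    · intro h
      rcases h with h | h
      · rw [h]; exact hlt
      · rw [Fin.lt_def] at h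
        by_contra hno
        have hne : π i ≠ P := by
          intro he
          have : i = (⟨p, hp⟩ : Fin n) := π.injective he
          have := congrArg Fin.val this
          simp at this; omega
        have hPlt : P < π i := lt_of_le_of_ne (not_lt.mp hno) (Ne.symm hne)
        exact rankLemma π hav (i : ℕ) i.2 i0 ⟨p, hp⟩ (by simpa using hi0)
          (by simpa using h) (by simpa [Fin.eta] using hlt.trans hPlt)
          (by simpa [Fin.eta] using hPlt)
  have hnot : i0 ∉ Finset.Ioi (⟨p, hp⟩ : Fin n) := by
    simp only [Finset.mem_Ioi, Fin.lt_def]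
    omega
  rw [hset, Finset.card_insert_of_notMem hnot, Fin.card_Ioi] at hcard
  simp only [Fin.val_mk] at hcard
  omega

end Encode


section Encode2

variable {n : ℕ} (π : Equiv.Perm (Fin n))

lemma val_of_bit_false (hav : ¬ contains123 π ∧ ¬ contains213 π)
    (p : ℕ) (hp : p < n)
    (hnosmall : ∀ i : Fin n, (i : ℕ) < p → ¬ (π i < π ⟨p, hp⟩))
    (q0 : ℕ) (hq0p : p < q0) (hq0n : q0 ≤ n)
    (hmid : ∀ q, p < q → q < q0 → ∃ hq : q < n, ∃ i : Fin n, (i : ℕ) < q ∧ π i < π ⟨q, hq⟩)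
    (hq0f : ∀ hq : q0 < n, ∀ i : Fin n, (i : ℕ) < q0 → ¬ (π i < π ⟨q0, hq⟩)) :
    ((π ⟨p, hp⟩ : Fin n) : ℕ) = n - q0 := by
  set P := π ⟨p, hp⟩ with hPdef
  have hup : ∀ i : Fin n, (i : ℕ) < p → P < π i := by
    intro i hi
    rcases lt_trichotomy (π i) P with h | h | h
    · exact absurd h (hnosmall i hi)
    · exfalso
      have : i = (⟨p, hp⟩ : Fin n) := π.injective h
      have := congrArg Fin.val this
      simp at this; omega
    · exact h
  have hmidval : ∀ i : Fin n, p < (i : ℕ) → (i : ℕ) < q0 → ((π i : Fin n) : ℕ) = n - i := by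
    intro i h1 h2
    obtain ⟨hq, i', hi', hlt⟩ := hmid (i : ℕ) h1 h2
    have := val_of_bit_true π hav (i : ℕ) hq i' hi' hlt
    simpa [Fin.eta] using this
  have hdown : ∀ i : Fin n, q0 ≤ (i : ℕ) → π i < P := by
    intro i hi
    have hq0n' : q0 < n := lt_of_le_of_lt hi i.2
    have hq0lt : π ⟨q0, hq0n'⟩ < P := by
      rcases lt_trichotomy (π ⟨q0, hq0n'⟩) P with h | h | h
      · exact h
      · exfalso
        have : (⟨q0, hq0n'⟩ : Fin n) = (⟨p, hp⟩ : Fin n) := π.injective h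
        simp only [Fin.mk.injEq] at this; omega
      · exact absurd h (hq0f hq0n' ⟨p, hp⟩ (by simpa using hq0p))
    rcases Nat.eq_or_lt_of_le hi with h | h
    · have : i = (⟨q0, hq0n'⟩ : Fin n) := Fin.ext (by simp; omega)
      rw [this]; exact hq0lt
    · by_contra hno
      have hne : π i ≠ P := by
        intro he
        have : i = (⟨p, hp⟩ : Fin n) := π.injective he
        have := congrArg Fin.val this
        simp at this; omega
      have hPlt : P < π i := lt_of_le_of_ne (not_lt.mp hno) (Ne.symm hne)
      exact rankLemma π hav (i : ℕ) i.2 ⟨p, hp⟩ ⟨q0, hq0n'⟩ (by simpa using hq0p)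
        (by simpa using h) (by simpa [Fin.eta] using hPlt)
        (by simpa [Fin.eta] using hq0lt.trans hPlt)
  -- bound 1 : p ≤ n - 1 - P
  have hb1 : p ≤ n - 1 - (P : ℕ) := by
    have := Finset.card_le_card_of_injOn (f := fun i => π i)
      (s := Finset.Iio (⟨p, hp⟩ : Fin n)) (t := Finset.Ioi P)
      (by
        intro i hi
        simp only [Finset.mem_coe, Finset.mem_Iio, Fin.lt_def] at hi
        simp only [Finset.mem_coe, Finset.mem_Ioi]
        exact hup i hi)
      (fun a _ b _ hab => π.injective hab)
    rwa [Fin.card_Iio, Fin.card_Ioi] at this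
  have hPle : (P : ℕ) ≤ n - 1 := by have := P.2; omega
  -- bound 2 : n - q0 ≤ P
  have hb2 : n - q0 ≤ (P : ℕ) := by
    by_cases hq : q0 < n
    · have := Finset.card_le_card_of_injOn (f := fun i => π i)
        (s := Finset.Ici (⟨q0, hq⟩ : Fin n)) (t := Finset.Iio P)
        (by
          intro i hi
          simp only [Finset.mem_coe, Finset.mem_Ici, Fin.le_def] at hi
          simp only [Finset.mem_coe, Finset.mem_Iio]
          exact hdown i hi)
        (fun a _ b _ hab => π.injective hab)
      rwa [Fin.card_Ici, Fin.card_Iio] at this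
    · omega
  -- bound 3
  have hb3 : ∀ m, n - q0 < m → m + p ≤ n - 1 → (P : ℕ) ≠ m := by
    intro m h1 h2 he
    have hiq : p < n - m ∧ n - m < q0 ∧ n - m < n := by omega
    have := hmidval ⟨n - m, hiq.2.2⟩ (by simpa using hiq.1) (by simpa using hiq.2.1)
    simp only [Fin.val_mk] at this
    have hm : ((π ⟨n - m, hiq.2.2⟩ : Fin n) : ℕ) = m := by omega
    have hne : P ≠ π ⟨n - m, hiq.2.2⟩ := by
      intro hee
      have : (⟨p, hp⟩ : Fin n) = ⟨n - m, hiq.2.2⟩ := π.injective hee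
      simp only [Fin.mk.injEq] at this; omega
    exact hne (Fin.ext (by omega))
  by_contra hne
  have hgt : n - q0 < (P : ℕ) := lt_of_le_of_ne hb2 (Ne.symm hne)
  exact hb3 (P : ℕ) hgt (by omega) rfl

end Encode2

section Final

variable {n : ℕ}

noncomputable def encodeFun (π : Equiv.Perm (Fin n)) : Fin (n-1) → Bool :=
  fun m => decide (∃ i : Fin n, (i : ℕ) < (m : ℕ) + 1 ∧
    π i < π ⟨(m : ℕ) + 1, by have := m.isLt; omega⟩)

lemma BBp_encode (π : Equiv.Perm (Fin n)) (q : ℕ) :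
    BBp n (encodeFun π) q ↔
      (1 ≤ q ∧ ∃ h : q < n, ∃ i : Fin n, (i : ℕ) < q ∧ π i < π ⟨q, h⟩) := by
  constructor
  · rintro ⟨h, h1, hdec⟩
    rw [encodeFun, decide_eq_true_eq] at hdec
    obtain ⟨i, hi, hlt⟩ := hdec
    have hq : q < n := by omega
    have e : (⟨((⟨q-1, h⟩ : Fin (n-1)) : ℕ) + 1, by simp; omega⟩ : Fin n) = ⟨q, hq⟩ :=
      Fin.ext (by simp; omega)
    refine ⟨h1, hq, i, ?_, ?_⟩
    · simp only [Fin.val_mk] at hi; omega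
    · rw [← e]; exact hlt
  · rintro ⟨h1, hq, i, hi, hlt⟩
    refine ⟨by omega, h1, ?_⟩
    rw [encodeFun, decide_eq_true_eq]
    have e : (⟨((⟨q-1, by omega⟩ : Fin (n-1)) : ℕ) + 1, by simp; omega⟩ : Fin n) = ⟨q, hq⟩ :=
      Fin.ext (by simp; omega)
    refine ⟨i, by simp; omega, ?_⟩
    rw [e]; exact hlt

lemma encode_decode (b : Fin (n-1) → Bool) : encodeFun (decodePerm n b) = b := by
  funext m
  have hm := m.isLt
  have h2 : (m : ℕ) + 1 < n := by omega
  have key := decode_bit n b ((m : ℕ) + 1) (by omega) h2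
  have hBB : BBp n b ((m : ℕ) + 1) ↔ b m = true := by
    constructor
    · rintro ⟨h, h1, hb⟩
      have : (⟨(m : ℕ) + 1 - 1, h⟩ : Fin (n-1)) = m := Fin.ext (by simp)
      rwa [this] at hb
    · intro hb
      refine ⟨by simpa using hm, by omega, ?_⟩
      have : (⟨(m : ℕ) + 1 - 1, by simpa using hm⟩ : Fin (n-1)) = m := Fin.ext (by simp)
      rw [this]; exact hb
  rw [encodeFun]
  rcases hb : b m with _ | _
  · simp only [decide_eq_false_iff_not]
    intro hex
    have := key.mp hex
    rw [hBB] at this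
    simp [hb] at this
  · simp only [decide_eq_true_eq]
    exact key.mpr (hBB.mpr hb)

lemma decode_encode (π : Equiv.Perm (Fin n))
    (hav : ¬ contains123 π ∧ ¬ contains213 π) :
    decodePerm n (encodeFun π) = π := by
  apply Equiv.ext
  intro p
  set b := encodeFun π with hbdef
  rw [decodePerm_apply]
  symm
  apply Fin.ext
  simp only [Fin.val_mk]
  have hpeta : (⟨(p : ℕ), p.isLt⟩ : Fin n) = p := Fin.eta p _
  by_cases hB : BBp n b (p : ℕ)
  · have hg : gf n b (p : ℕ) = (p : ℕ) := if_pos hB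
    obtain ⟨h1, hpn, i, hi, hlt⟩ := (BBp_encode π (p : ℕ)).mp hB
    have := val_of_bit_true π hav (p : ℕ) hpn i hi hlt
    rw [hg]
    simp only [Fin.eta] at this
    exact this
  · have hg : gf n b (p : ℕ) = nzf n b (p : ℕ) := if_neg hB
    set q0 := nzf n b (p : ℕ) with hq0def
    have hq0p : (p : ℕ) < q0 := (nzf_mem n b _).1
    have hq0n : q0 ≤ n := nzf_le_n p.isLt
    have hnosmall : ∀ i : Fin n, (i : ℕ) < (p : ℕ) → ¬ (π i < π ⟨(p : ℕ), p.isLt⟩) := by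
      intro i hi hlt
      exact hB ((BBp_encode π (p : ℕ)).mpr ⟨by omega, p.isLt, i, hi, hlt⟩)
    have hmid : ∀ q, (p : ℕ) < q → q < q0 →
        ∃ hq : q < n, ∃ i : Fin n, (i : ℕ) < q ∧ π i < π ⟨q, hq⟩ := by
      intro q hq1 hq2
      have := (BBp_encode π q).mp (nzf_min hq1 hq2)
      exact this.2
    have hq0f : ∀ hq : q0 < n, ∀ i : Fin n, (i : ℕ) < q0 → ¬ (π i < π ⟨q0, hq⟩) := by
      intro hq i hi hlt
      exact (nzf_mem n b (p : ℕ)).2 ((BBp_encode π q0).mpr ⟨by omega, hq, i, hi, hlt⟩)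
    have := val_of_bit_false π hav (p : ℕ) p.isLt hnosmall q0 hq0p hq0n hmid hq0f
    rw [hg]
    simp only [Fin.eta] at this
    exact this

end Final

end Stmt7Aux

theorem stmt7 (n : ℕ) (hn : 1 ≤ n) :
    Nat.card {π : Equiv.Perm (Fin n) // ¬ contains123 π ∧ ¬ contains213 π} = 2 ^ (n - 1) := by
  have e : {π : Equiv.Perm (Fin n) // ¬ contains123 π ∧ ¬ contains213 π} ≃
      (Fin (n-1) → Bool) :=
    { toFun := fun π => Stmt7Aux.encodeFun π.1
      invFun := fun b => ⟨Stmt7Aux.decodePerm n b, Stmt7Aux.decode_avoids n b⟩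
      left_inv := fun π => Subtype.ext (Stmt7Aux.decode_encode π.1 π.2)
      right_inv := fun b => Stmt7Aux.encode_decode b }
  rw [Nat.card_congr e, Nat.card_eq_fintype_card]
  simp
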